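/- The gap-tooth scheme of order 2 with exact integration applied to the heat equation u_t = a* u_xx coincides with the forward-Euler central finite difference scheme: if U_i^{n+1} = U_i^n + a*Δt·(s_i^+ - s_i^-)/h where s_i^± are the derivatives at x_i ± h/2 of the quadratic polynomial matching the box averages U_{i-1}^n, U_i^n, U_{i+1}^n, then U_i^{n+1} = U_i^n + a*Δt·(U_{i+1}^n - 2U_i^n + U_{i-1}^n)/Δx². -/

import Mathlib

open intervalIntegral

lemma quad_integral (a b c l u : ℝ) :
    (∫ ξ in l..u, (a * ξ^2 + b * ξ + c)) =
      a * (u^3 - l^3) / 3 + b * (u^2 - l^2) / 2 + c * (u - l) := by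
  have key : ∀ x ∈ Set.uIcc l u,
      HasDerivAt (fun x : ℝ => a * x^3 / 3 + b * x^2 / 2 + c * x)
        (a * x^2 + b * x + c) x := by
    intro x _
    have h3 : HasDerivAt (fun x : ℝ => x^3) (3 * x^2) x := by
      simpa using hasDerivAt_pow 3 x
    have h2 : HasDerivAt (fun x : ℝ => x^2) (2 * x) x := by
      simpa using hasDerivAt_pow 2 x
    have := (((h3.const_mul a).div_const 3).add ((h2.const_mul b).div_const 2)).add
      ((hasDerivAt_id x).const_mul c)
    exact this.congr_deriv (by ring)
  rw [intervalIntegral.integral_eq_sub_of_hasDerivAt key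
    ((by fun_prop : Continuous fun x : ℝ => a * x^2 + b * x + c).intervalIntegrable l u)]
  ring

lemma quad_deriv (a b c x : ℝ) :
    deriv (fun x => a * x^2 + b * x + c) x = 2 * a * x + b := by
  have : HasDerivAt (fun x => a * x^2 + b * x + c) (2 * a * x + b) x := by
    have h1 : HasDerivAt (fun x : ℝ => x^2) (2 * x) x := by
      simpa using hasDerivAt_pow 2 x
    have := (((h1.const_mul a).add ((hasDerivAt_id x).const_mul b)).add_const c)
    exact this.congr_deriv (by ring)
  exact this.deriv

theorem stmt10 (astar Δt Δx h xi : ℝ) (ha : 0 < astar) (ht : 0 < Δt)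
    (hΔx : 0 < Δx) (hh : 0 < h) (hhΔ : h ≤ Δx)
    (Um Ui Up a b c : ℝ) (p : ℝ → ℝ) (hp : ∀ x, p x = a * x^2 + b * x + c)
    (havgm : (1/h) * ∫ ξ in (xi - Δx - h/2)..(xi - Δx + h/2), p ξ = Um)
    (havg0 : (1/h) * ∫ ξ in (xi - h/2)..(xi + h/2), p ξ = Ui)
    (havgp : (1/h) * ∫ ξ in (xi + Δx - h/2)..(xi + Δx + h/2), p ξ = Up)
    (sp sm : ℝ) (hsp : sp = deriv p (xi + h/2)) (hsm : sm = deriv p (xi - h/2)) :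
    Ui + astar * Δt * (sp - sm) / h =
      Ui + astar * Δt * (Up - 2 * Ui + Um) / Δx^2 := by
  have hpfun : p = fun x => a * x^2 + b * x + c := funext hp
  subst hpfun
  simp only [quad_integral, quad_deriv] at *
  subst havgm havg0 havgp hsp hsm
  field_simp
  ring
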